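/- (Kubo–Mori information matrix of a PQC with thermal-state initialization.) Let D_i = ∂_i ρ(φ) and define I^{KM}_{ij}(φ) = Σ_{k,ℓ<d} c(λ_k, λ_ℓ) ⟨k| D_i |ℓ⟩ ⟨ℓ| D_j |k⟩, where c(a,b) = (ln a − ln b)/(a − b) for a ≠ b and c(a,a) = 1/a, |k⟩ = U(φ)|k̃⟩, and (|k̃⟩, λ_k) is the eigensystem of ρ. Then for all i, j ∈ {1,…,J}: I^{KM}_{ij}(φ) = Tr[[[A_j, G], A_i] ρ], where A_j = U_{R_j}† H_j U_{R_j} and [X,Y] = XY − YX. -/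

import Mathlib

open Matrix

noncomputable section

attribute [local instance] Matrix.linftyOpNormedAddCommGroup Matrix.linftyOpNormedSpace

/-- Square complex matrices of size `d`. -/
abbrev Mat (d : ℕ) := Matrix (Fin d) (Fin d) ℂ

/-- Descending product `f (a + n - 1) * ⋯ * f (a + 1) * f a` (empty product is `1`). -/
def descProd {d : ℕ} (f : ℕ → Mat d) (a : ℕ) : ℕ → Mat d
  | 0 => 1
  | n + 1 => f (a + n) * descProd f a n

/-- The `j`-th layer `U_j(φ_j) = exp (−i φ_j H_j) V_j`. -/
def layer {d : ℕ} (H V : ℕ → Mat d) (φ : ℕ → ℝ) (j : ℕ) : Mat d :=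
  NormedSpace.exp ((-(Complex.I * (φ j : ℂ))) • H j) * V j

/-- `U_{R_j} = U_j ⋯ U_1`. -/
def UR {d : ℕ} (H V : ℕ → Mat d) (φ : ℕ → ℝ) (j : ℕ) : Mat d :=
  descProd (layer H V φ) 1 j

/-- `U_{L_j} = U_J ⋯ U_j`. -/
def UL {d : ℕ} (H V : ℕ → Mat d) (φ : ℕ → ℝ) (J j : ℕ) : Mat d :=
  descProd (layer H V φ) j (J + 1 - j)

/-- The full layered circuit `U(φ) = U_J ⋯ U_1`. -/
def Ufull {d : ℕ} (H V : ℕ → Mat d) (φ : ℕ → ℝ) (J : ℕ) : Mat d :=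
  UR H V φ J

/-- `B_j = U_{L_{j+1}} H_j U_{L_{j+1}}†`. -/
def Bmat {d : ℕ} (H V : ℕ → Mat d) (φ : ℕ → ℝ) (J j : ℕ) : Mat d :=
  UL H V φ J (j + 1) * H j * (UL H V φ J (j + 1))ᴴ

/-- `A_j = U_{R_j}† H_j U_{R_j}`. -/
def Amat {d : ℕ} (H V : ℕ → Mat d) (φ : ℕ → ℝ) (j : ℕ) : Mat d :=
  (UR H V φ j)ᴴ * H j * UR H V φ j

/-- The thermal state `ρ = e^{−G}/Z`. -/
def thermal {d : ℕ} (G : Mat d) (Z : ℝ) : Mat d :=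
  (Z : ℂ)⁻¹ • NormedSpace.exp (-G)

/-- The parameterized state `ρ(φ) = U(φ) ρ U(φ)†`. -/
def rhoFun {d : ℕ} (H V : ℕ → Mat d) (J : ℕ) (G : Mat d) (Z : ℝ) (φ : ℕ → ℝ) : Mat d :=
  Ufull H V φ J * thermal G Z * (Ufull H V φ J)ᴴ

/-- The sesquilinear form `⟨u| M |v⟩`, conjugate-linear in `u`. -/
def braket {d : ℕ} (u : Fin d → ℂ) (M : Mat d) (v : Fin d → ℂ) : ℂ :=
  star u ⬝ᵥ M.mulVec v

/-- The Kubo–Mori coefficient `c(a,b) = (ln a − ln b)/(a − b)` for `a ≠ b`, `c(a,a) = 1/a`. -/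
def kmCoeff (a b : ℝ) : ℝ :=
  if a = b then 1 / a else (Real.log a - Real.log b) / (a - b)

attribute [local instance] Matrix.linftyOpNormedRing Matrix.linftyOpNormedAlgebra

lemma descProd_add {d : ℕ} (f : ℕ → Mat d) (a m n : ℕ) :
    descProd f a (m + n) = descProd f (a + n) m * descProd f a n := by
  induction m with
  | zero => simp [descProd]
  | succ m ih =>
      have h1 : m + 1 + n = (m + n) + 1 := by omega
      have h2 : a + n + m = a + (m + n) := by omega
      rw [h1, descProd, descProd, h2, ih, mul_assoc]

lemma descProd_congr {d : ℕ} (f g : ℕ → Mat d) (a n : ℕ)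
    (h : ∀ m, m < n → f (a + m) = g (a + m)) : descProd f a n = descProd g a n := by
  induction n with
  | zero => rfl
  | succ n ih =>
      rw [descProd, descProd, h n (by omega), ih (fun m hm => h m (by omega))]

lemma descProd_mem {d : ℕ} (f : ℕ → Mat d) (a n : ℕ)
    (h : ∀ m, m < n → f (a + m) ∈ Matrix.unitaryGroup (Fin d) ℂ) :
    descProd f a n ∈ Matrix.unitaryGroup (Fin d) ℂ := by
  induction n with
  | zero => exact Submonoid.one_mem _
  | succ n ih =>
      exact Submonoid.mul_mem _ (h n (by omega)) (ih (fun m hm => h m (by omega)))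

lemma exp_mulVec_eigen {d : ℕ} (A : Mat d) (w : Fin d → ℂ) (c : ℂ)
    (h : A.mulVec w = c • w) :
    (NormedSpace.exp A).mulVec w = Complex.exp c • w := by
  have hpow : ∀ n : ℕ, (A ^ n).mulVec w = c ^ n • w := by
    intro n
    induction n with
    | zero => simp
    | succ n ih =>
        rw [pow_succ, ← Matrix.mulVec_mulVec, h, Matrix.mulVec_smul, ih, smul_smul, pow_succ,
          mul_comm]
  let L : Mat d →ₗ[ℂ] (Fin d → ℂ) :=
    { toFun := fun M => M.mulVec w
      map_add' := fun M N => Matrix.add_mulVec M N w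
      map_smul' := fun r M => Matrix.smul_mulVec r M w }
  have hL : (NormedSpace.exp A).mulVec w = L (NormedSpace.exp A) := rfl
  rw [hL, NormedSpace.exp_eq_tsum ℂ]
  have hsum : Summable (fun n : ℕ => (n.factorial : ℂ)⁻¹ • A ^ n) :=
    NormedSpace.expSeries_summable' (𝕂 := ℂ) A
  rw [show (L : Mat d → (Fin d → ℂ)) = (L.toContinuousLinearMap : Mat d → (Fin d → ℂ)) from rfl]
  rw [L.toContinuousLinearMap.map_tsum hsum]
  have : ∀ n : ℕ, L.toContinuousLinearMap ((n.factorial : ℂ)⁻¹ • A ^ n) = ((n.factorial : ℂ)⁻¹ * c ^ n) • w := by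
    intro n
    rw [_root_.map_smul]
    show (n.factorial : ℂ)⁻¹ • (A ^ n).mulVec w = _
    rw [hpow, smul_smul]
  rw [tsum_congr this, Summable.tsum_smul_const ?_]
  · congr 1
    have := NormedSpace.exp_eq_tsum (𝕂 := ℂ) (𝔸 := ℂ)
    rw [Complex.exp_eq_exp_ℂ, this]
    simp [smul_eq_mul]
  · have := NormedSpace.expSeries_summable' (𝕂 := ℂ) (x := c)
    simpa [smul_eq_mul] using this

lemma exp_skew_unitary {d : ℕ} {Hm : Mat d} (hH : Hm.IsHermitian) (c : ℂ) (hc : star c = -c) :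
    NormedSpace.exp (c • Hm) ∈ Matrix.unitaryGroup (Fin d) ℂ := by
  rw [Matrix.mem_unitaryGroup_iff']
  have h1 : (star (NormedSpace.exp (c • Hm)) : Mat d) = NormedSpace.exp ((-c) • Hm) := by
    rw [Matrix.star_eq_conjTranspose, ← Matrix.exp_conjTranspose]
    congr 1
    rw [Matrix.conjTranspose_smul, hH.eq, hc]
  rw [h1, ← Matrix.exp_add_of_commute _ _ (by
    simpa using ((Commute.refl Hm).smul_left (-c)).smul_right c)]
  simp

lemma layer_unitary {d : ℕ} {H V : ℕ → Mat d} (hH : ∀ j, (H j).IsHermitian)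
    (hV : ∀ j, V j ∈ Matrix.unitaryGroup (Fin d) ℂ) (φ : ℕ → ℝ) (j : ℕ) :
    layer H V φ j ∈ Matrix.unitaryGroup (Fin d) ℂ := by
  refine Submonoid.mul_mem _ ?_ (hV j)
  refine exp_skew_unitary (hH j) _ ?_
  simp

lemma UR_unitary {d : ℕ} {H V : ℕ → Mat d} (hH : ∀ j, (H j).IsHermitian)
    (hV : ∀ j, V j ∈ Matrix.unitaryGroup (Fin d) ℂ) (φ : ℕ → ℝ) (j : ℕ) :
    UR H V φ j ∈ Matrix.unitaryGroup (Fin d) ℂ :=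
  descProd_mem _ _ _ (fun m _ => layer_unitary hH hV φ _)

lemma unit_mul_conj {d : ℕ} {U : Mat d} (h : U ∈ Matrix.unitaryGroup (Fin d) ℂ) :
    U * Uᴴ = 1 := by
  have := Matrix.mem_unitaryGroup_iff.mp h
  simpa [Matrix.star_eq_conjTranspose] using this

lemma conj_mul_unit {d : ℕ} {U : Mat d} (h : U ∈ Matrix.unitaryGroup (Fin d) ℂ) :
    Uᴴ * U = 1 := by
  have := Matrix.mem_unitaryGroup_iff'.mp h
  simpa [Matrix.star_eq_conjTranspose] using this

lemma thermal_herm {d : ℕ} {G : Mat d} (hG : G.IsHermitian) (Z : ℝ) :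
    (thermal G Z).IsHermitian := by
  show _ = _
  unfold thermal
  rw [Matrix.conjTranspose_smul, ← Matrix.exp_conjTranspose]
  congr 1
  · simp [Complex.star_def, ← Complex.ofReal_inv]
  · congr 1
    rw [Matrix.conjTranspose_neg, hG.eq]

lemma braket_mulVec {d : ℕ} (Um M : Mat d) (x y : Fin d → ℂ)
    (hU : Um ∈ Matrix.unitaryGroup (Fin d) ℂ) :
    braket (Um.mulVec x) M (Um.mulVec y) = braket x (Umᴴ * M * Um) y := by
  unfold braket
  rw [Matrix.star_mulVec, Matrix.mulVec_mulVec, ← Matrix.dotProduct_mulVec,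
    Matrix.mulVec_mulVec, Matrix.mul_assoc]

lemma braket_sub {d : ℕ} (x y : Fin d → ℂ) (M N : Mat d) :
    braket x (M - N) y = braket x M y - braket x N y := by
  unfold braket
  rw [Matrix.sub_mulVec, dotProduct_sub]

lemma braket_smul {d : ℕ} (x y : Fin d → ℂ) (c : ℂ) (M : Mat d) :
    braket x (c • M) y = c * braket x M y := by
  unfold braket
  rw [Matrix.smul_mulVec, dotProduct_smul, smul_eq_mul]

lemma braket_mul_right {d : ℕ} (x y : Fin d → ℂ) (M N : Mat d) (c : ℂ)
    (hy : N.mulVec y = c • y) :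
    braket x (M * N) y = c * braket x M y := by
  unfold braket
  rw [← Matrix.mulVec_mulVec, hy, Matrix.mulVec_smul, dotProduct_smul, smul_eq_mul]

lemma braket_mul_left {d : ℕ} (x y : Fin d → ℂ) (M N : Mat d) (c : ℝ)
    (hN : N.IsHermitian) (hx : N.mulVec x = (c : ℂ) • x) :
    braket x (N * M) y = c * braket x M y := by
  unfold braket
  rw [← Matrix.mulVec_mulVec, Matrix.dotProduct_mulVec]
  have h1 : star x ᵥ* N = (c : ℂ) • star x := by
    conv_lhs => rw [← hN.eq]
    rw [← Matrix.star_mulVec, hx]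
    simp [star_smul, Complex.star_def, Complex.conj_ofReal]
  rw [h1, smul_dotProduct, smul_eq_mul, Matrix.dotProduct_mulVec]

lemma W_entry {d : ℕ} (v : Fin d → Fin d → ℂ) (X : Mat d) (k l : Fin d) :
    ((Matrix.of fun a b => v b a)ᴴ * X * (Matrix.of fun a b => v b a)) k l
      = braket (v k) X (v l) := by
  simp only [Matrix.mul_apply, braket, dotProduct, Matrix.mulVec,
    Matrix.conjTranspose_apply, Matrix.of_apply, Finset.sum_mul, Finset.mul_sum]
  rw [Finset.sum_comm]
  refine Finset.sum_congr rfl fun a _ => Finset.sum_congr rfl fun b _ => ?_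
  simp only [Pi.star_apply]; ring

lemma W_unitary {d : ℕ} (v : Fin d → Fin d → ℂ)
    (hortho : ∀ k l, star (v k) ⬝ᵥ v l = if k = l then 1 else 0) :
    ((Matrix.of fun a b => v b a)ᴴ) * (Matrix.of fun a b => v b a) = 1 := by
  ext k l
  simp only [Matrix.mul_apply, Matrix.conjTranspose_apply, Matrix.of_apply]
  have := hortho k l
  simp only [dotProduct, Pi.star_apply] at this
  rw [this]
  simp [Matrix.one_apply, eq_comm]

lemma trace_eq_sum_braket {d : ℕ} (v : Fin d → Fin d → ℂ)
    (hortho : ∀ k l, star (v k) ⬝ᵥ v l = if k = l then 1 else 0) (N : Mat d) :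
    N.trace = ∑ k : Fin d, braket (v k) N (v k) := by
  set W : Mat d := Matrix.of fun a b => v b a with hW
  have h1 : Wᴴ * W = 1 := W_unitary v hortho
  have h2 : W * Wᴴ = 1 := mul_eq_one_comm.mp h1
  have h3 : (Wᴴ * N * W).trace = N.trace := by
    rw [Matrix.trace_mul_comm, ← Matrix.mul_assoc, h2, Matrix.one_mul]
  rw [← h3, Matrix.trace]
  refine Finset.sum_congr rfl fun k _ => ?_
  rw [Matrix.diag_apply, W_entry]

lemma braket_mul_expand {d : ℕ} (v : Fin d → Fin d → ℂ)
    (hortho : ∀ k l, star (v k) ⬝ᵥ v l = if k = l then 1 else 0) (P Q : Mat d) (k l : Fin d) :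
    braket (v k) (P * Q) (v l) = ∑ m : Fin d, braket (v k) P (v m) * braket (v m) Q (v l) := by
  set W : Mat d := Matrix.of fun a b => v b a with hW
  have h1 : Wᴴ * W = 1 := W_unitary v hortho
  have h2 : W * Wᴴ = 1 := mul_eq_one_comm.mp h1
  have h3 : Wᴴ * (P * Q) * W = (Wᴴ * P * W) * (Wᴴ * Q * W) := by
    rw [show (Wᴴ * P * W) * (Wᴴ * Q * W) = Wᴴ * P * (W * Wᴴ) * Q * W by
      simp only [Matrix.mul_assoc], h2]
    simp only [Matrix.mul_assoc, Matrix.one_mul]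
  have h4 := W_entry v (P * Q) k l
  rw [h3] at h4
  rw [← h4, Matrix.mul_apply]
  refine Finset.sum_congr rfl fun m _ => ?_
  rw [W_entry, W_entry]

lemma key_alg {d : ℕ} (L Et Vi R ρ Hm : Mat d)
    (hE : Et * Etᴴ = 1) (hE2 : Etᴴ * Et = 1)
    (hVu : Vi * Viᴴ = 1) (hVu2 : Viᴴ * Vi = 1)
    (hR : R * Rᴴ = 1) (hR2 : Rᴴ * R = 1)
    (hcomm : Et * Hm = Hm * Et) :
    (L * (Et * ((-Complex.I) • Hm)) * (Vi * R * ρ * (Rᴴ * Viᴴ)) * Etᴴ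
      + L * Et * (Vi * R * ρ * (Rᴴ * Viᴴ)) * (Etᴴ * (Complex.I • Hm))) * Lᴴ
    = (-Complex.I) • ((L * (Et * Vi) * R) *
        ((((Et * Vi) * R)ᴴ * Hm * ((Et * Vi) * R)) * ρ
          - ρ * (((Et * Vi) * R)ᴴ * Hm * ((Et * Vi) * R))) *
        (L * (Et * Vi) * R)ᴴ) := by
  have cE : ∀ X : Mat d, Et * (Etᴴ * X) = X := fun X => by
    rw [← Matrix.mul_assoc, hE, Matrix.one_mul]
  have cE2 : ∀ X : Mat d, Etᴴ * (Et * X) = X := fun X => by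
    rw [← Matrix.mul_assoc, hE2, Matrix.one_mul]
  have cV : ∀ X : Mat d, Vi * (Viᴴ * X) = X := fun X => by
    rw [← Matrix.mul_assoc, hVu, Matrix.one_mul]
  have cV2 : ∀ X : Mat d, Viᴴ * (Vi * X) = X := fun X => by
    rw [← Matrix.mul_assoc, hVu2, Matrix.one_mul]
  have cR : ∀ X : Mat d, R * (Rᴴ * X) = X := fun X => by
    rw [← Matrix.mul_assoc, hR, Matrix.one_mul]
  have cR2 : ∀ X : Mat d, Rᴴ * (R * X) = X := fun X => by
    rw [← Matrix.mul_assoc, hR2, Matrix.one_mul]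
  have hc : ∀ X : Mat d, Et * (Hm * X) = Hm * (Et * X) := fun X => by
    rw [← Matrix.mul_assoc, hcomm, Matrix.mul_assoc]
  simp only [Matrix.conjTranspose_mul, Matrix.mul_sub, Matrix.sub_mul, smul_sub,
    Matrix.mul_smul, Matrix.smul_mul, Matrix.mul_assoc, add_mul]
  simp only [cE, cE2, cV, cV2, cR, cR2, hc]
  simp only [smul_smul, neg_mul, Complex.I_mul_I, neg_neg, one_smul, neg_smul]
  abel

lemma scalar_smul_eq {d : ℕ} (HH : Mat d) (x : ℝ) :
    (-(Complex.I * (x : ℂ))) • HH = x • ((-Complex.I) • HH) := by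
  ext a b
  simp [Matrix.smul_apply, Complex.real_smul]
  ring

lemma hasDerivAt_E {d : ℕ} (M : Mat d) (t : ℝ) :
    HasDerivAt (fun u : ℝ => NormedSpace.exp (u • M)) (NormedSpace.exp (t • M) * M) t := by
  have h := hasDerivAt_exp_smul_const (𝕂 := ℝ) M t
  exact h

lemma UR_split {d : ℕ} (H V : ℕ → Mat d) (ψ : ℕ → ℝ) {i J : ℕ} (hi1 : 1 ≤ i) (hiJ : i ≤ J) :
    Ufull H V ψ J = descProd (layer H V ψ) (i + 1) (J - i) *
      (layer H V ψ i * descProd (layer H V ψ) 1 (i - 1)) := by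
  unfold Ufull UR
  have hJ : J = (J - i) + ((i - 1) + 1) := by omega
  conv_lhs => rw [hJ]
  rw [descProd_add, descProd]
  have e1 : 1 + ((i - 1) + 1) = i + 1 := by omega
  have e2 : 1 + (i - 1) = i := by omega
  rw [e1, e2]

lemma rho_hasDeriv {d J : ℕ} (H V : ℕ → Mat d) (hH : ∀ j, (H j).IsHermitian)
    (hV : ∀ j, V j ∈ Matrix.unitaryGroup (Fin d) ℂ) (G : Mat d) (Z : ℝ) (φ : ℕ → ℝ)
    (i : ℕ) (hi1 : 1 ≤ i) (hiJ : i ≤ J) :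
    HasDerivAt (fun x : ℝ => rhoFun H V J G Z (Function.update φ i x))
      ((-Complex.I) • (Ufull H V φ J *
        (Amat H V φ i * thermal G Z - thermal G Z * Amat H V φ i) * (Ufull H V φ J)ᴴ))
      (φ i) := by
  classical
  set M : Mat d := (-Complex.I) • H i with hM
  set L : Mat d := descProd (layer H V φ) (i + 1) (J - i) with hL
  set R : Mat d := descProd (layer H V φ) 1 (i - 1) with hR
  set C : Mat d := V i * R * thermal G Z * (Rᴴ * (V i)ᴴ) with hC
  have hMH : Mᴴ = Complex.I • H i := by
    rw [hM, Matrix.conjTranspose_smul, (hH i).eq]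
    simp [Complex.star_def]
  have hsc : ∀ x : ℝ, (-(Complex.I * (x : ℂ))) • H i = x • M := fun x => scalar_smul_eq (H i) x
  have hsmulH : ∀ x : ℝ, ((x • M : Mat d))ᴴ = x • Mᴴ := fun x => by
    rw [Matrix.conjTranspose_smul, star_trivial]
  -- the update decomposition
  have hUup : ∀ x : ℝ, Ufull H V (Function.update φ i x) J
      = L * (NormedSpace.exp (x • M) * V i) * R := by
    intro x
    rw [UR_split H V _ hi1 hiJ]
    have hcongr1 : descProd (layer H V (Function.update φ i x)) (i + 1) (J - i) = L := by
      rw [hL]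
      refine descProd_congr _ _ _ _ fun m hm => ?_
      unfold layer
      rw [Function.update_of_ne (by omega)]
    have hcongr2 : descProd (layer H V (Function.update φ i x)) 1 (i - 1) = R := by
      rw [hR]
      refine descProd_congr _ _ _ _ fun m hm => ?_
      unfold layer
      rw [Function.update_of_ne (by omega)]
    rw [hcongr1, hcongr2]
    unfold layer
    rw [Function.update_self, hsc]
    simp only [Matrix.mul_assoc]
  have hfun : ∀ x : ℝ, rhoFun H V J G Z (Function.update φ i x)
      = L * NormedSpace.exp (x • M) * C * NormedSpace.exp (x • Mᴴ) * Lᴴ := by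
    intro x
    unfold rhoFun
    rw [hUup x]
    have : (L * (NormedSpace.exp (x • M) * V i) * R)ᴴ
        = Rᴴ * ((V i)ᴴ * NormedSpace.exp (x • Mᴴ)) * Lᴴ := by
      simp only [Matrix.conjTranspose_mul]
      rw [← hsmulH x, Matrix.exp_conjTranspose]
      simp only [Matrix.mul_assoc]
    rw [this, hC]
    simp only [Matrix.mul_assoc]
  -- derivative construction
  set t := φ i with ht
  have hE : HasDerivAt (fun x : ℝ => NormedSpace.exp (x • M))
      (NormedSpace.exp (t • M) * M) t := hasDerivAt_E M t
  have hE' : HasDerivAt (fun x : ℝ => NormedSpace.exp (x • Mᴴ))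
      (NormedSpace.exp (t • Mᴴ) * Mᴴ) t := hasDerivAt_E Mᴴ t
  set Et : Mat d := NormedSpace.exp (t • M) with hEt
  set Et' : Mat d := NormedSpace.exp (t • Mᴴ) with hEt'
  have h1 : HasDerivAt (fun x : ℝ => L * NormedSpace.exp (x • M)) (L * (Et * M)) t :=
    hE.const_mul L
  have h2 := h1.mul_const C
  have h3 := h2.mul hE'
  have h4 := h3.mul_const Lᴴ
  have hfe : (fun x : ℝ => rhoFun H V J G Z (Function.update φ i x))
      = fun x : ℝ => L * NormedSpace.exp (x • M) * C * NormedSpace.exp (x • Mᴴ) * Lᴴ :=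
    funext hfun
  have h5 : HasDerivAt
      (fun x : ℝ => L * NormedSpace.exp (x • M) * C * NormedSpace.exp (x • Mᴴ) * Lᴴ)
      ((L * (Et * M) * C * Et' + L * Et * C * (Et' * Mᴴ)) * Lᴴ) t := h4
  -- now the algebraic identity
  have hEtH : Et' = Etᴴ := by
    rw [hEt, hEt', ← Matrix.exp_conjTranspose, hsmulH]
  -- unitarity facts
  have hEtu : Et ∈ Matrix.unitaryGroup (Fin d) ℂ := by
    rw [hEt, ← hsc t]
    refine exp_skew_unitary (hH i) _ ?_
    simp [Complex.star_def]
  have hRu : R ∈ Matrix.unitaryGroup (Fin d) ℂ := descProd_mem _ _ _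
    (fun m _ => layer_unitary hH hV φ _)
  have hUfull : Ufull H V φ J = L * (Et * V i) * R := by
    have := hUup t
    rwa [Function.update_eq_self] at this
  have hlayer : layer H V φ i = Et * V i := by
    unfold layer
    rw [hsc, hEt, ht]
  have hURi : UR H V φ i = Et * V i * R := by
    unfold UR
    have hi' : i = (i - 1) + 1 := by omega
    conv_lhs => rw [hi']
    rw [descProd]
    have e2 : 1 + (i - 1) = i := by omega
    rw [e2, hlayer, hR]
  have hcomm : Et * H i = H i * Et := by
    have : Commute (t • M) (H i) := by
      rw [hM]
      exact (((Commute.refl (H i)).smul_left (-Complex.I)).smul_left t)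
    exact this.exp_left.eq
  have halg := key_alg L Et (V i) R (thermal G Z) (H i)
    (unit_mul_conj hEtu) (conj_mul_unit hEtu)
    (unit_mul_conj (hV i)) (conj_mul_unit (hV i))
    (unit_mul_conj hRu) (conj_mul_unit hRu) hcomm
  have heq : (L * (Et * M) * C * Et' + L * Et * C * (Et' * Mᴴ)) * Lᴴ
      = (-Complex.I) • (Ufull H V φ J *
          (Amat H V φ i * thermal G Z - thermal G Z * Amat H V φ i) * (Ufull H V φ J)ᴴ) := by
    rw [hUfull]
    unfold Amat
    rw [hURi, ← halg, hEtH, hMH, hM, hC]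
  rw [hfe, ← heq]
  exact h5

lemma km_scalar {Z : ℝ} (hZpos : 0 < Z) (mk ml : ℝ) :
    kmCoeff (Real.exp (-mk) / Z) (Real.exp (-ml) / Z) *
        ((Real.exp (-mk) / Z - Real.exp (-ml) / Z) * (Real.exp (-mk) / Z - Real.exp (-ml) / Z))
      = (ml - mk) * (Real.exp (-mk) / Z - Real.exp (-ml) / Z) := by
  set a := Real.exp (-mk) / Z with ha
  set b := Real.exp (-ml) / Z with hb
  by_cases h : a = b
  · rw [h]; simp
  · unfold kmCoeff
    rw [if_neg h]
    have hab : a - b ≠ 0 := sub_ne_zero.mpr h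
    have hla : Real.log a = -mk - Real.log Z := by
      rw [ha, Real.log_div (Real.exp_ne_zero _) (ne_of_gt hZpos), Real.log_exp]
    have hlb : Real.log b = -ml - Real.log Z := by
      rw [hb, Real.log_div (Real.exp_ne_zero _) (ne_of_gt hZpos), Real.log_exp]
    field_simp
    rw [hla, hlb]
    ring

lemma neg_I_mul_mul (c p q A B : ℂ) :
    c * (-Complex.I * p * A) * (-Complex.I * q * B) = -(c * p * q * A * B) := by
  have h : Complex.I * Complex.I = -1 := Complex.I_mul_I
  linear_combination (c * p * q * A * B) * h

set_option maxHeartbeats 1000000 in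
/-- Kubo–Mori information matrix of a PQC with thermal-state initialization:
`I^{KM}_{ij}(φ) = Tr[[[A_j, G], A_i] ρ]`. -/
theorem kubo_mori_pqc {d J : ℕ} (hd : 1 ≤ d)
    (H V G : _) (hH : ∀ j, (H j : Mat d).IsHermitian)
    (hV : ∀ j, V j ∈ Matrix.unitaryGroup (Fin d) ℂ)
    (hG : (G : Mat d).IsHermitian)
    (Z : ℝ) (hZpos : 0 < Z) (hZ : (NormedSpace.exp (-G)).trace = (Z : ℂ))
    (v : Fin d → Fin d → ℂ)
    (hortho : ∀ k l, star (v k) ⬝ᵥ v l = if k = l then 1 else 0)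
    (μ : Fin d → ℝ) (hGv : ∀ k, G.mulVec (v k) = (μ k : ℂ) • v k)
    (lam : Fin d → ℝ) (hlam : ∀ k, lam k = Real.exp (-(μ k)) / Z)
    (φ : ℕ → ℝ) (i j : ℕ) (hi1 : 1 ≤ i) (hiJ : i ≤ J) (hj1 : 1 ≤ j) (hjJ : j ≤ J)
    (Di Dj : Mat d)
    (hDi : HasDerivAt (fun x : ℝ => rhoFun H V J G Z (Function.update φ i x)) Di (φ i))
    (hDj : HasDerivAt (fun x : ℝ => rhoFun H V J G Z (Function.update φ j x)) Dj (φ j)) :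
    ∑ k : Fin d, ∑ l : Fin d,
        ((kmCoeff (lam k) (lam l) : ℝ) : ℂ) *
          braket ((Ufull H V φ J).mulVec (v k)) Di ((Ufull H V φ J).mulVec (v l)) *
          braket ((Ufull H V φ J).mulVec (v l)) Dj ((Ufull H V φ J).mulVec (v k)) =
      (((Amat H V φ j * G - G * Amat H V φ j) * Amat H V φ i -
          Amat H V φ i * (Amat H V φ j * G - G * Amat H V φ j)) *
        thermal G Z).trace := by
  have hUu : Ufull H V φ J ∈ Matrix.unitaryGroup (Fin d) ℂ := UR_unitary hH hV φ J
  set U : Mat d := Ufull H V φ J with hU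
  set ρ₀ : Mat d := thermal G Z with hρ₀
  set Ai : Mat d := Amat H V φ i with hAi
  set Aj : Mat d := Amat H V φ j with hAj
  -- derivative values
  have hDival : Di = (-Complex.I) • (U * (Ai * ρ₀ - ρ₀ * Ai) * Uᴴ) :=
    hDi.unique (rho_hasDeriv H V hH hV G Z φ i hi1 hiJ)
  have hDjval : Dj = (-Complex.I) • (U * (Aj * ρ₀ - ρ₀ * Aj) * Uᴴ) :=
    hDj.unique (rho_hasDeriv H V hH hV G Z φ j hj1 hjJ)
  -- eigenvalue facts
  have hρv : ∀ k, ρ₀.mulVec (v k) = ((lam k : ℝ) : ℂ) • v k := by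
    intro k
    have hexp : (NormedSpace.exp (-G)).mulVec (v k)
        = Complex.exp (((-μ k : ℝ) : ℂ)) • v k := by
      refine exp_mulVec_eigen _ _ _ ?_
      rw [Matrix.neg_mulVec, hGv k]
      push_cast
      rw [neg_smul]
    rw [hρ₀]
    unfold thermal
    rw [Matrix.smul_mulVec, hexp, smul_smul, hlam k]
    congr 1
    rw [← Complex.ofReal_exp]
    push_cast
    ring
  have hρherm : ρ₀.IsHermitian := thermal_herm hG Z
  -- conjugation identity
  have hconj : ∀ N : Mat d, Uᴴ * ((-Complex.I) • (U * N * Uᴴ)) * U = (-Complex.I) • N := by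
    intro N
    rw [Matrix.mul_smul, Matrix.smul_mul]
    congr 1
    rw [show Uᴴ * (U * N * Uᴴ) * U = (Uᴴ * U) * N * (Uᴴ * U) by simp only [Matrix.mul_assoc],
      conj_mul_unit hUu, Matrix.one_mul, Matrix.mul_one]
  -- braket reductions
  have hbra : ∀ (A D : Mat d), D = (-Complex.I) • (U * (A * ρ₀ - ρ₀ * A) * Uᴴ) →
      ∀ k l, braket (U.mulVec (v k)) D (U.mulVec (v l))
        = -Complex.I * (((lam l : ℝ) : ℂ) - ((lam k : ℝ) : ℂ)) * braket (v k) A (v l) := by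
    intro A D hD k l
    rw [hD, braket_mulVec _ _ _ _ hUu, hconj, braket_smul, braket_sub,
      braket_mul_right _ _ _ _ _ (hρv l), braket_mul_left _ _ _ _ _ hρherm (hρv k)]
    ring
  have hbi := hbra Ai Di hDival
  have hbj := hbra Aj Dj hDjval
  -- abbreviations for matrix elements
  set a : Fin d → Fin d → ℂ := fun k l => braket (v k) Ai (v l) with hadef
  set b : Fin d → Fin d → ℂ := fun k l => braket (v k) Aj (v l) with hbdef
  -- scalar identity in ℂ
  have hscal : ∀ k l : Fin d,
      ((kmCoeff (lam k) (lam l) : ℝ) : ℂ) *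
          ((((lam k : ℝ) : ℂ) - ((lam l : ℝ) : ℂ)) * (((lam k : ℝ) : ℂ) - ((lam l : ℝ) : ℂ)))
        = (((μ l : ℝ) : ℂ) - ((μ k : ℝ) : ℂ)) * (((lam k : ℝ) : ℂ) - ((lam l : ℝ) : ℂ)) := by
    intro k l
    have hr : kmCoeff (lam k) (lam l) * ((lam k - lam l) * (lam k - lam l))
        = (μ l - μ k) * (lam k - lam l) := by
      rw [hlam k, hlam l]
      exact km_scalar hZpos (μ k) (μ l)
    have hc := congrArg (fun x : ℝ => (x : ℂ)) hr
    push_cast at hc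
    push_cast
    linear_combination hc
  -- LHS computation
  have hLHS : ∑ k : Fin d, ∑ l : Fin d,
      ((kmCoeff (lam k) (lam l) : ℝ) : ℂ) *
        braket (U.mulVec (v k)) Di (U.mulVec (v l)) *
        braket (U.mulVec (v l)) Dj (U.mulVec (v k))
      = ∑ k : Fin d, ∑ l : Fin d,
        (((lam k : ℝ) : ℂ) * ((((μ l : ℝ) : ℂ)) - ((μ k : ℝ) : ℂ)) * a k l * b l k
          + ((lam l : ℝ) : ℂ) * ((((μ k : ℝ) : ℂ)) - ((μ l : ℝ) : ℂ)) * a k l * b l k) := by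
    refine Finset.sum_congr rfl fun k _ => Finset.sum_congr rfl fun l _ => ?_
    rw [hbi k l, hbj l k]
    rw [show ((kmCoeff (lam k) (lam l) : ℝ) : ℂ) *
        (-Complex.I * (((lam l : ℝ) : ℂ) - ((lam k : ℝ) : ℂ)) * braket (v k) Ai (v l)) *
        (-Complex.I * (((lam k : ℝ) : ℂ) - ((lam l : ℝ) : ℂ)) * braket (v l) Aj (v k))
      = -(((kmCoeff (lam k) (lam l) : ℝ) : ℂ) * (((lam l : ℝ) : ℂ) - ((lam k : ℝ) : ℂ)) *
          (((lam k : ℝ) : ℂ) - ((lam l : ℝ) : ℂ)) * braket (v k) Ai (v l) *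
          braket (v l) Aj (v k)) from neg_I_mul_mul _ _ _ _ _]
    have := hscal k l
    linear_combination (braket (v k) Ai (v l) * braket (v l) Aj (v k)) * this
  -- RHS computation
  have hRHS : (((Aj * G - G * Aj) * Ai - Ai * (Aj * G - G * Aj)) * ρ₀).trace
      = ∑ k : Fin d, ∑ l : Fin d,
        (((lam k : ℝ) : ℂ) * ((((μ l : ℝ) : ℂ)) - ((μ k : ℝ) : ℂ)) * b k l * a l k
          + ((lam k : ℝ) : ℂ) * ((((μ l : ℝ) : ℂ)) - ((μ k : ℝ) : ℂ)) * a k l * b l k) := by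
    rw [trace_eq_sum_braket v hortho]
    refine Finset.sum_congr rfl fun k _ => ?_
    rw [braket_mul_right _ _ _ _ _ (hρv k), braket_sub,
      braket_mul_expand v hortho, braket_mul_expand v hortho]
    rw [← Finset.sum_sub_distrib, Finset.mul_sum]
    refine Finset.sum_congr rfl fun l _ => ?_
    have hCjkl : ∀ k' l' : Fin d, braket (v k') (Aj * G - G * Aj) (v l')
        = ((μ l' : ℝ) : ℂ) * b k' l' - ((μ k' : ℝ) : ℂ) * b k' l' := by
      intro k' l'
      rw [braket_sub, braket_mul_right _ _ _ _ _ (hGv l'),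
        braket_mul_left _ _ _ _ _ hG (hGv k')]
    rw [hCjkl k l, hCjkl l k]
    ring
  rw [hLHS, hRHS]
  rw [show (∑ k : Fin d, ∑ l : Fin d,
        (((lam k : ℝ) : ℂ) * ((((μ l : ℝ) : ℂ)) - ((μ k : ℝ) : ℂ)) * a k l * b l k
          + ((lam l : ℝ) : ℂ) * ((((μ k : ℝ) : ℂ)) - ((μ l : ℝ) : ℂ)) * a k l * b l k))
      = (∑ k : Fin d, ∑ l : Fin d,
        ((lam k : ℝ) : ℂ) * ((((μ l : ℝ) : ℂ)) - ((μ k : ℝ) : ℂ)) * a k l * b l k)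
        + (∑ k : Fin d, ∑ l : Fin d,
        ((lam l : ℝ) : ℂ) * ((((μ k : ℝ) : ℂ)) - ((μ l : ℝ) : ℂ)) * a k l * b l k) by
      rw [← Finset.sum_add_distrib]
      exact Finset.sum_congr rfl fun k _ => Finset.sum_add_distrib]
  rw [show (∑ k : Fin d, ∑ l : Fin d,
        (((lam k : ℝ) : ℂ) * ((((μ l : ℝ) : ℂ)) - ((μ k : ℝ) : ℂ)) * b k l * a l k
          + ((lam k : ℝ) : ℂ) * ((((μ l : ℝ) : ℂ)) - ((μ k : ℝ) : ℂ)) * a k l * b l k))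
      = (∑ k : Fin d, ∑ l : Fin d,
        ((lam k : ℝ) : ℂ) * ((((μ l : ℝ) : ℂ)) - ((μ k : ℝ) : ℂ)) * b k l * a l k)
        + (∑ k : Fin d, ∑ l : Fin d,
        ((lam k : ℝ) : ℂ) * ((((μ l : ℝ) : ℂ)) - ((μ k : ℝ) : ℂ)) * a k l * b l k) by
      rw [← Finset.sum_add_distrib]
      exact Finset.sum_congr rfl fun k _ => Finset.sum_add_distrib]
  rw [add_comm]
  congr 1
  · rw [Finset.sum_comm]
    exact Finset.sum_congr rfl fun k _ => Finset.sum_congr rfl fun l _ => by ring
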